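/- For a topological space X and n ≥ 2, every open filter F on X satisfies |aF| ≥ n−1 if and only if for every set A ⊆ X with |A| < n−1 and every family U of open sets covering X∖A, there is a finite subfamily V ⊆ U with X = ⋃{cl(V) : V ∈ V}. -/

import Mathlib

open Set Topology Function

universe u v

/-- A space is `n`-Hausdorff if any `n` distinct points admit open neighborhoods
with empty intersection. -/
def NHausdorff (X : Type u) [TopologicalSpace X] (n : ℕ) : Prop :=
  ∀ x : Fin n → X, Function.Injective x →
    ∃ U : Fin n → Set X, (∀ i, IsOpen (U i) ∧ x i ∈ U i) ∧ (⋂ i, U i) = (∅ : Set X)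

/-- An open filter on `X`: a nonempty family of nonempty open sets closed under
finite intersections and open supersets. -/
structure IsOpenFilter {X : Type u} [TopologicalSpace X] (F : Set (Set X)) : Prop where
  nonempty : F.Nonempty
  isOpen_mem : ∀ U ∈ F, IsOpen U
  nonempty_mem : ∀ U ∈ F, U.Nonempty
  inter_mem : ∀ U ∈ F, ∀ V ∈ F, U ∩ V ∈ F
  superset_mem : ∀ U ∈ F, ∀ V : Set X, IsOpen V → U ⊆ V → V ∈ F

/-- An open ultrafilter: a maximal open filter. -/
def IsOpenUltrafilter {X : Type u} [TopologicalSpace X] (F : Set (Set X)) : Prop :=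
  IsOpenFilter F ∧ ∀ G : Set (Set X), IsOpenFilter G → F ⊆ G → G = F

/-- The adherence of a family of sets: `⋂ {cl U : U ∈ F}`. -/
def adh {X : Type u} [TopologicalSpace X] (F : Set (Set X)) : Set X :=
  ⋂ U ∈ F, closure U

lemma notin_closure_compl_closure {X : Type u} [TopologicalSpace X] {U : Set X}
    (hU : IsOpen U) {x : X} (hx : x ∈ U) : x ∉ closure (closure U)ᶜ := by
  intro hmem
  have h0 : U ∩ (closure U)ᶜ = ∅ := by
    ext y; simp only [mem_inter_iff, mem_compl_iff, mem_empty_iff_false, iff_false, not_and,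
      not_not]
    exact fun hy => subset_closure hy
  have := hU.inter_closure (t := (closure U)ᶜ) ⟨hx, hmem⟩
  rw [h0, closure_empty] at this
  exact this

lemma univ_mem_openFilter {X : Type u} [TopologicalSpace X] {F : Set (Set X)}
    (hF : IsOpenFilter F) : univ ∈ F := by
  obtain ⟨U, hU⟩ := hF.nonempty
  exact hF.superset_mem U hU univ isOpen_univ (subset_univ U)

lemma biInter_mem_openFilter {X : Type u} [TopologicalSpace X] {F : Set (Set X)}
    (hF : IsOpenFilter F) {s : Set (Set X)} (hs : s.Finite) (g : Set X → Set X) :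
    (∀ V ∈ s, g V ∈ F) → (⋂ V ∈ s, g V) ∈ F := by
  refine Set.Finite.induction_on s hs ?_ ?_
  · intro _; simpa using univ_mem_openFilter hF
  · intro a t _ _ ih hg
    rw [biInter_insert]
    exact hF.inter_mem _ (hg _ (mem_insert _ _)) _ (ih fun V hV => hg V (mem_insert_of_mem _ hV))

theorem stmt3 {X : Type u} [TopologicalSpace X] (n : ℕ) (hn : 2 ≤ n) :
    (∀ F : Set (Set X), IsOpenFilter F → (n - 1 : ℕ) ≤ (adh F).encard) ↔
      (∀ A : Set X, A.encard < (n - 1 : ℕ) →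
        ∀ 𝒰 : Set (Set X), (∀ U ∈ 𝒰, IsOpen U) → Aᶜ ⊆ ⋃₀ 𝒰 →
          ∃ 𝒱 ⊆ 𝒰, 𝒱.Finite ∧ (⋃ V ∈ 𝒱, closure V) = (univ : Set X)) := by
  constructor
  · intro h A hA 𝒰 hopen hcov
    by_contra hno
    push_neg at hno
    set F : Set (Set X) :=
      {W | IsOpen W ∧ ∃ 𝒱 ⊆ 𝒰, 𝒱.Finite ∧ (⋃ V ∈ 𝒱, closure V)ᶜ ⊆ W} with hFdef
    have hF : IsOpenFilter F := by
      constructor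
      · exact ⟨univ, isOpen_univ, ∅, empty_subset _, finite_empty, subset_univ _⟩
      · exact fun W hW => hW.1
      · rintro W ⟨hWo, 𝒱, h𝒱, hfin, hsub⟩
        have : (⋃ V ∈ 𝒱, closure V)ᶜ.Nonempty :=
          Set.nonempty_compl.2 (hno 𝒱 h𝒱 hfin)
        exact this.mono hsub
      · rintro W1 ⟨h1o, 𝒱1, hs1, hf1, hc1⟩ W2 ⟨h2o, 𝒱2, hs2, hf2, hc2⟩
        refine ⟨h1o.inter h2o, 𝒱1 ∪ 𝒱2, union_subset hs1 hs2, hf1.union hf2, ?_⟩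
        rw [biUnion_union, compl_union]
        exact inter_subset_inter hc1 hc2
      · rintro W ⟨hWo, 𝒱, hs, hf, hc⟩ V hVo hWV
        exact ⟨hVo, 𝒱, hs, hf, hc.trans hWV⟩
    have hsub : adh F ⊆ A := by
      intro x hx
      by_contra hxA
      obtain ⟨U, hU𝒰, hxU⟩ := hcov hxA
      have hUF : (closure U)ᶜ ∈ F := by
        refine ⟨isClosed_closure.isOpen_compl, {U}, singleton_subset_iff.2 hU𝒰,
          finite_singleton _, ?_⟩
        simp
      have hxcl : x ∈ closure (closure U)ᶜ := by
        have := hx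
        rw [adh, mem_iInter₂] at this
        exact this _ hUF
      exact notin_closure_compl_closure (hopen U hU𝒰) hxU hxcl
    exact absurd (le_trans (h F hF) (Set.encard_mono hsub)) (not_le.2 hA)
  · intro h F hF
    by_contra hlt
    push_neg at hlt
    set 𝒰 : Set (Set X) := {V | ∃ W ∈ F, (closure W)ᶜ = V} with h𝒰def
    have hopen : ∀ U ∈ 𝒰, IsOpen U := by
      rintro U ⟨W, hW, rfl⟩
      exact isClosed_closure.isOpen_compl
    have hcov : (adh F)ᶜ ⊆ ⋃₀ 𝒰 := by
      intro x hx
      rw [mem_compl_iff, adh, mem_iInter₂] at hx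
      push_neg at hx
      obtain ⟨W, hW, hxW⟩ := hx
      exact ⟨(closure W)ᶜ, ⟨W, hW, rfl⟩, hxW⟩
    obtain ⟨𝒱, h𝒱sub, h𝒱fin, h𝒱⟩ := h (adh F) hlt 𝒰 hopen hcov
    have key : ∀ V ∈ 𝒱, ∃ W, W ∈ F ∧ (closure W)ᶜ = V := by
      intro V hV
      obtain ⟨W, hW, hWV⟩ := h𝒱sub hV
      exact ⟨W, hW, hWV⟩
    choose! g hg1 hg2 using key
    have hmem : (⋂ V ∈ 𝒱, g V) ∈ F :=
      biInter_mem_openFilter hF h𝒱fin g hg1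
    obtain ⟨w, hw⟩ := hF.nonempty_mem _ hmem
    have hwU : w ∈ ⋃ V ∈ 𝒱, closure V := h𝒱 ▸ mem_univ w
    rw [mem_iUnion₂] at hwU
    obtain ⟨V, hV, hwV⟩ := hwU
    rw [mem_iInter₂] at hw
    have hwg : w ∈ g V := hw V hV
    have : w ∈ closure (closure (g V))ᶜ := by rw [hg2 V hV]; exact hwV
    exact notin_closure_compl_closure (hF.isOpen_mem _ (hg1 V hV)) hwg this
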